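/- arXiv:2511.23095 — 2 statements merged into one kernel-verified Lean document; each statement's English description precedes it below -/
import Mathlib

section
/- Each vector R_i (i = 1, 2, 3, 4) is a right eigenvector of the matrix A with eigenvalue λ_i: A R₁ = λ₁ R₁, A R₂ = u R₂, A R₃ = u R₃, and A R₄ = λ₄ R₄. -/
lemma row1_key (ρ β σ κ ψ u lam ρ₁ ρ₂ : ℝ) (hρ : ρ ≠ 0)
    (hmix : ρ - ρ₂ = (ρ₁ - ρ₂) * ψ)
    (hsq : (lam - (1 + ρ₂ / (2 * ρ)) * u)^2 = ((1 + ρ₂ / (2*ρ))*u - u) ^ 2 + β - σ * κ * ψ / ρ) :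
    β + 2*u*(lam - ρ₂*u/ρ) + (-(ρ₁-ρ₂)*u^2 - σ*κ)*(ψ/ρ) = lam*(lam - ρ₂*u/ρ) := by
  field_simp at hsq ⊢
  have h16 : (16:ℝ)*ρ^4 ≠ 0 := by positivity
  have key : (β*ρ + 2*u*(lam*ρ - ρ₂*u) + ((ρ₂-ρ₁)*u^2 - σ*κ)*ψ - lam*(lam*ρ - ρ₂*u)) * (16*ρ^4) = 0 := by
    linear_combination (-4*ρ^3)*hsq + (16*ρ^4*u^2)*hmix
  have := (mul_eq_zero.mp key).resolve_right h16
  linarith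




/-- Each vector `R_i` is a right eigenvector of the coefficient matrix `A` with
eigenvalue `λ_i`. -/
theorem right_eigenvectors_of_A
    (ρ β σ κ ψ u v ρ₁ ρ₂ : ℝ) (hρ : 0 < ρ) (hβ : 0 < β)
    (hmix : ρ - ρ₂ = (ρ₁ - ρ₂) * ψ)
    (uρ as lam1 lam4 : ℝ) (huρ : uρ = (1 + ρ₂ / (2 * ρ)) * u)
    (hnn : 0 ≤ (uρ - u) ^ 2 + β - σ * κ * ψ / ρ)
    (has : as = Real.sqrt ((uρ - u) ^ 2 + β - σ * κ * ψ / ρ))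
    (hlam1 : lam1 = uρ - as) (hlam4 : lam4 = uρ + as) :
    (!![u, 1, 0, -(ρ₁ - ρ₂) * u;
        β, 2 * u, 0, -(ρ₁ - ρ₂) * u ^ 2 - σ * κ;
        0, v, u, -(ρ₁ - ρ₂) * u * v;
        0, ψ / ρ, 0, ρ₂ * u / ρ]).mulVec ![1, lam1 - ρ₂ * u / ρ, v, ψ / ρ]
      = lam1 • ![1, lam1 - ρ₂ * u / ρ, v, ψ / ρ] ∧
    (!![u, 1, 0, -(ρ₁ - ρ₂) * u;
        β, 2 * u, 0, -(ρ₁ - ρ₂) * u ^ 2 - σ * κ;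
        0, v, u, -(ρ₁ - ρ₂) * u * v;
        0, ψ / ρ, 0, ρ₂ * u / ρ]).mulVec ![σ * κ / β, (ρ₁ - ρ₂) * u, 0, 1]
      = u • ![σ * κ / β, (ρ₁ - ρ₂) * u, 0, 1] ∧
    (!![u, 1, 0, -(ρ₁ - ρ₂) * u;
        β, 2 * u, 0, -(ρ₁ - ρ₂) * u ^ 2 - σ * κ;
        0, v, u, -(ρ₁ - ρ₂) * u * v;
        0, ψ / ρ, 0, ρ₂ * u / ρ]).mulVec ![0, 0, 1, 0]
      = u • (![0, 0, 1, 0] : Fin 4 → ℝ) ∧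
    (!![u, 1, 0, -(ρ₁ - ρ₂) * u;
        β, 2 * u, 0, -(ρ₁ - ρ₂) * u ^ 2 - σ * κ;
        0, v, u, -(ρ₁ - ρ₂) * u * v;
        0, ψ / ρ, 0, ρ₂ * u / ρ]).mulVec ![1, lam4 - ρ₂ * u / ρ, v, ψ / ρ]
      = lam4 • ![1, lam4 - ρ₂ * u / ρ, v, ψ / ρ] := by
  have hρ' : ρ ≠ 0 := ne_of_gt hρ
  have hβ' : β ≠ 0 := ne_of_gt hβ
  have hsq : as ^ 2 = (uρ - u) ^ 2 + β - σ * κ * ψ / ρ := by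
    rw [has]; exact Real.sq_sqrt hnn
  have hsq1 : (lam1 - (1 + ρ₂ / (2 * ρ)) * u)^2 = ((1 + ρ₂ / (2*ρ))*u - u) ^ 2 + β - σ * κ * ψ / ρ := by
    rw [hlam1, ← huρ]; linear_combination hsq
  have hsq4 : (lam4 - (1 + ρ₂ / (2 * ρ)) * u)^2 = ((1 + ρ₂ / (2*ρ))*u - u) ^ 2 + β - σ * κ * ψ / ρ := by
    rw [hlam4, ← huρ]; linear_combination hsq
  have h1 := row1_key ρ β σ κ ψ u lam1 ρ₁ ρ₂ hρ' hmix hsq1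
  have h4 := row1_key ρ β σ κ ψ u lam4 ρ₁ ρ₂ hρ' hmix hsq4
  have hρeq : ρ = ρ₂ + (ρ₁ - ρ₂) * ψ := by linarith
  subst hρeq
  refine ⟨?_, ?_, ?_, ?_⟩ <;> funext i <;> fin_cases i <;>
      simp [Matrix.mulVec, dotProduct, Fin.sum_univ_succ] <;>
    first
      | linarith [h1, h4]
      | (have hX : ψ * ρ₁ - ψ * ρ₂ + ρ₂ ≠ 0 := by intro h; apply hρ'; linear_combination h
         linear_combination u * mul_inv_cancel₀ hX)
      | (field_simp; ring)
end

section
/- The rotational invariance identity holds: for any unit vector n = (n_x, n_y), F_c(U) n_x + G_c(U) n_y + B_x(U,κ) U n_x + B_y(U,κ) U n_y = T⁻¹ (F_c(TU) + B_x(TU,κ) (TU)), where T is the rotation matrix diag-block rotating the momentum components. -/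
/-- Rotational invariance of the conservative fluxes and non-conservative products of the
weakly compressible two-phase model. -/
theorem rotational_invariance
    (β σ κ ρ₁ ρ₂ p u v ψ ρ nx ny uh vh : ℝ)
    (hρ : ρ = ρ₁ * ψ + ρ₂ * (1 - ψ)) (hρ0 : 0 < ρ) (hβ : β ≠ 0)
    (hn : nx ^ 2 + ny ^ 2 = 1)
    (hu : uh = u * nx + v * ny) (hv : vh = -u * ny + v * nx) :
    nx • (![ρ * u, ρ * u ^ 2 + p, ρ * u * v, u * ψ] : Fin 4 → ℝ)
      + ny • (![ρ * v, ρ * u * v, ρ * v ^ 2 + p, v * ψ] : Fin 4 → ℝ)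
      + nx • ((!![u, 0, 0, -(ρ₁ - ρ₂) * u;
                  0, 0, 0, -σ * κ;
                  0, 0, 0, 0;
                  0, 0, 0, 0]).mulVec ![p / β, ρ * u, ρ * v, ψ])
      + ny • ((!![v, 0, 0, -(ρ₁ - ρ₂) * v;
                  0, 0, 0, 0;
                  0, 0, 0, -σ * κ;
                  0, 0, 0, 0]).mulVec ![p / β, ρ * u, ρ * v, ψ])
    = (!![1, 0, 0, 0;
          0, nx, -ny, 0;
          0, ny, nx, 0;
          0, 0, 0, 1]).mulVec
        ((![ρ * uh, ρ * uh ^ 2 + p, ρ * uh * vh, uh * ψ] : Fin 4 → ℝ)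
          + (!![uh, 0, 0, -(ρ₁ - ρ₂) * uh;
                0, 0, 0, -σ * κ;
                0, 0, 0, 0;
                0, 0, 0, 0]).mulVec ![p / β, ρ * uh, ρ * vh, ψ]) := by
  subst hu hv
  funext i
  fin_cases i
  · simp [Matrix.mulVec, dotProduct, Fin.sum_univ_four, Matrix.vecHead, Matrix.vecTail,
      Function.comp]
    ring
  · simp [Matrix.mulVec, dotProduct, Fin.sum_univ_four, Matrix.vecHead, Matrix.vecTail,
      Function.comp]
    linear_combination (-(ρ * u * (u * nx + v * ny))) * hn
  · simp [Matrix.mulVec, dotProduct, Fin.sum_univ_four, Matrix.vecHead, Matrix.vecTail,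
      Function.comp]
    linear_combination (-(ρ * v * (u * nx + v * ny))) * hn
  · simp [Matrix.mulVec, dotProduct, Fin.sum_univ_four, Matrix.vecHead, Matrix.vecTail,
      Function.comp]
    ring
end
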